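/- Existence and uniqueness of the formal Maurer–Cartan solution with given initial value: for every x ∈ V the h-adic contraction C_x has a unique fixed point τ_x among formal deformation series, i.e. a unique sequence τ with τ = δ₁x − (1/2) Q(τ,τ); moreover the Kuranishi map recovers the initial value: F(τ_x) = δ₁x, and in particular (τ_x)_1 = x. -/

import Mathlib

/-- Extension of a sequence indexed by {1,2,3,...} to ℕ by zero. -/
def ext {V : Type*} [AddCommGroup V] (a : ℕ+ → V) : ℕ → V :=
  fun n => if h : 0 < n then a ⟨n, h⟩ else 0

/-- The convolution Q(a,a´)_b = Σ_{i+j=b, i,j≥1} Q(a_i, a´_j) of two formal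
deformation series (terms with index 0 vanish since Q is bilinear). -/
def conv {K V : Type*} [Field K] [AddCommGroup V] [Module K V]
    (Q : V →ₗ[K] V →ₗ[K] V) (a a' : ℕ+ → V) (b : ℕ+) : V :=
  ∑ i ∈ Finset.range ((b : ℕ) + 1), Q (ext a i) (ext a' ((b : ℕ) - i))

/-- The Kuranishi map F(a)_b = a_b + (1/2) Q(a,a)_b. -/
def kuranishi {K V : Type*} [Field K] [AddCommGroup V] [Module K V]
    (Q : V →ₗ[K] V →ₗ[K] V) (a : ℕ+ → V) : ℕ+ → V :=
  fun b => a b + (2 : K)⁻¹ • conv Q a a b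

/-- δ₁x : the sequence with first term x and all other terms 0. -/
def delta1 {V : Type*} [AddCommGroup V] (x : V) : ℕ+ → V :=
  fun b => if b = 1 then x else 0

/-- The h-adic contraction C_x(y) = δ₁x − (1/2) Q(y,y). -/
def picard {K V : Type*} [Field K] [AddCommGroup V] [Module K V]
    (Q : V →ₗ[K] V →ₗ[K] V) (x : V) (y : ℕ+ → V) : ℕ+ → V :=
  fun b => delta1 x b - (2 : K)⁻¹ • conv Q y y b

section Aux
variable {K V : Type*} [Field K] [AddCommGroup V] [Module K V]

lemma ext_zero (a : ℕ+ → V) : ext a 0 = 0 := by simp [ext]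

lemma ext_pos (a : ℕ+ → V) (n : ℕ) (hn : 0 < n) : ext a n = a ⟨n, hn⟩ := dif_pos hn

lemma conv_eq_Ioo (Q : V →ₗ[K] V →ₗ[K] V) (a a' : ℕ+ → V) (b : ℕ+) :
    conv Q a a' b = ∑ i ∈ Finset.Ioo 0 (b : ℕ), Q (ext a i) (ext a' ((b : ℕ) - i)) := by
  unfold conv
  refine (Finset.sum_subset ?_ ?_).symm
  · intro i hi
    simp only [Finset.mem_Ioo, Finset.mem_range] at hi ⊢
    omega
  · intro i hi hni
    simp only [Finset.mem_Ioo, Finset.mem_range] at hi hni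
    rcases (by omega : i = 0 ∨ i = (b : ℕ)) with h | h
    · simp [h, ext_zero]
    · simp [h, ext_zero]

lemma conv_one (Q : V →ₗ[K] V →ₗ[K] V) (a a' : ℕ+ → V) :
    conv Q a a' 1 = 0 := by
  rw [conv_eq_Ioo, show ((1 : ℕ+) : ℕ) = 1 from rfl,
    show Finset.Ioo 0 1 = ∅ by decide, Finset.sum_empty]

lemma conv_congr (Q : V →ₗ[K] V →ₗ[K] V) (σ σ' : ℕ+ → V) (b : ℕ+)
    (h : ∀ i : ℕ+, (i : ℕ) < (b : ℕ) → σ i = σ' i) :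
    conv Q σ σ b = conv Q σ' σ' b := by
  rw [conv_eq_Ioo, conv_eq_Ioo]
  refine Finset.sum_congr rfl fun i hi => ?_
  obtain ⟨h1, h2⟩ := Finset.mem_Ioo.mp hi
  have h3 : 0 < (b : ℕ) - i := by omega
  rw [ext_pos σ i h1, ext_pos σ' i h1, ext_pos σ _ h3, ext_pos σ' _ h3,
    h ⟨i, h1⟩ h2, h ⟨(b : ℕ) - i, h3⟩ (by simp; omega)]

noncomputable def tauN (Q : V →ₗ[K] V →ₗ[K] V) (x : V) : ℕ → V
  | 0 => 0
  | (n+1) => (if n + 1 = 1 then x else 0) -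
      (2 : K)⁻¹ • ∑ i ∈ (Finset.Ioo 0 (n+1)).attach,
        Q (tauN Q x i.1) (tauN Q x (n + 1 - i.1))
  termination_by n => n
  decreasing_by
  · have := Finset.mem_Ioo.mp i.2; omega
  · have := Finset.mem_Ioo.mp i.2; omega

lemma ext_tauN (Q : V →ₗ[K] V →ₗ[K] V) (x : V) (n : ℕ) :
    ext (fun b : ℕ+ => tauN Q x (b : ℕ)) n = tauN Q x n := by
  cases n with
  | zero => simp [ext_zero, tauN]
  | succ n => simp [ext]

lemma tau_fixed (Q : V →ₗ[K] V →ₗ[K] V) (x : V) :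
    picard Q x (fun b : ℕ+ => tauN Q x (b : ℕ)) = fun b : ℕ+ => tauN Q x (b : ℕ) := by
  funext b
  obtain ⟨n, hn⟩ := b
  obtain ⟨m, rfl⟩ : ∃ m, n = m + 1 := ⟨n - 1, by omega⟩
  show delta1 x (Nat.toPNat (m + 1) hn) - (2 : K)⁻¹ • conv Q (fun b : ℕ+ => tauN Q x (b : ℕ))
    (fun b : ℕ+ => tauN Q x (b : ℕ)) (Nat.toPNat (m + 1) hn) = tauN Q x (m + 1)
  rw [conv_eq_Ioo]
  simp only [ext_tauN]
  rw [tauN, Finset.sum_attach (Finset.Ioo 0 (m+1))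
    (fun i => Q (tauN Q x i) (tauN Q x (m + 1 - i)))]
  congr 1
  simp only [delta1]
  congr 1
  simp only [eq_iff_iff, PNat.mk_ofNat]
  constructor
  · intro h; exact congrArg Subtype.val h
  · intro h; exact Subtype.ext h

lemma fixed_unique (Q : V →ₗ[K] V →ₗ[K] V) (x : V) (σ σ' : ℕ+ → V)
    (hσ : picard Q x σ = σ) (hσ' : picard Q x σ' = σ') : σ = σ' := by
  suffices H : ∀ n : ℕ, ∀ hn : 0 < n, σ ⟨n, hn⟩ = σ' ⟨n, hn⟩ by
    funext b; obtain ⟨n, hn⟩ := b; exact H n hn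
  intro n
  induction n using Nat.strong_induction_on with
  | _ n ih =>
    intro hn
    have h1 := congrFun hσ ⟨n, hn⟩
    have h2 := congrFun hσ' ⟨n, hn⟩
    rw [← h1, ← h2]
    show delta1 x _ - _ = delta1 x _ - _
    rw [conv_congr Q σ σ' ⟨n, hn⟩ (fun i hi => ih (i : ℕ) hi i.2)]
end Aux

theorem stmt10 (K V : Type*) [Field K] [AddCommGroup V] [Module K V]
    (hchar : (2 : K) ≠ 0)
    (Q : V →ₗ[K] V →ₗ[K] V) (hQsymm : ∀ x y : V, Q x y = Q y x) :
    ∀ x : V,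
      (∃! τ : ℕ+ → V, picard Q x τ = τ) ∧
      (∀ τ : ℕ+ → V, picard Q x τ = τ →
        kuranishi Q τ = delta1 x ∧ τ 1 = x) := by
  intro x
  constructor
  · exact ⟨fun b : ℕ+ => tauN Q x (b : ℕ), tau_fixed Q x,
      fun σ hσ => fixed_unique Q x σ _ hσ (tau_fixed Q x)⟩
  · intro τ hτ
    have hb : ∀ b : ℕ+, τ b = delta1 x b - (2 : K)⁻¹ • conv Q τ τ b :=
      fun b => (congrFun hτ b).symm
    constructor
    · funext b
      show τ b + (2 : K)⁻¹ • conv Q τ τ b = delta1 x b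
      rw [hb b]; abel
    · rw [hb 1, conv_one]
      simp [delta1]
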